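/- Fix c ∈ ℂ and set f(z,t) = z² + 2it + c, D(z,t) = |z|² + |f(z,t)|², U(z,t) = i(z² − 2it − c)/D, and V(z,t) = 4(z̄² − 2it + c̄)/D − 2(2z(z̄² − 2it + c̄) + z̄)²/D². Then at every point (z,t) with D(z,t) ≠ 0 the pair (U,V) satisfies the DSII equation. -/

import Mathlib

open Complex ComplexConjugate

noncomputable section

/-- Wirtinger derivative ∂_z for a function of (z,t) ∈ ℂ×ℝ. -/
def dz (g : ℂ × ℝ → ℂ) (p : ℂ × ℝ) : ℂ :=
  (2 : ℂ)⁻¹ * (fderiv ℝ g p (1, 0) - Complex.I * fderiv ℝ g p (Complex.I, 0))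

/-- Wirtinger derivative ∂_z̄ for a function of (z,t) ∈ ℂ×ℝ. -/
def dzb (g : ℂ × ℝ → ℂ) (p : ℂ × ℝ) : ℂ :=
  (2 : ℂ)⁻¹ * (fderiv ℝ g p (1, 0) + Complex.I * fderiv ℝ g p (Complex.I, 0))

/-- Time derivative ∂_t for a function of (z,t) ∈ ℂ×ℝ. -/
def dt (g : ℂ × ℝ → ℂ) (p : ℂ × ℝ) : ℂ :=
  fderiv ℝ g p (0, 1)

/-- The pair (U,V) satisfies the DSII equation at the point p. -/
def DSIIAt (U V : ℂ × ℝ → ℂ) (p : ℂ × ℝ) : Prop :=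
  dt U p = Complex.I *
      (dz (dz U) p + dzb (dzb U) p + (V p + conj (V p)) * U p) ∧
  dzb V p = 2 * dz (fun q => U q * conj (U q)) p

namespace DSAux

/-! ### Pointwise derivative rules -/

variable {g h : ℂ × ℝ → ℂ} {p : ℂ × ℝ}

lemma fd_mul (hg : DifferentiableAt ℝ g p) (hh : DifferentiableAt ℝ h p) (v : ℂ × ℝ) :
    fderiv ℝ (fun q => g q * h q) p v = g p * fderiv ℝ h p v + h p * fderiv ℝ g p v := by
  rw [fderiv_fun_mul hg hh]
  simp [smul_eq_mul]

lemma fd_add (hg : DifferentiableAt ℝ g p) (hh : DifferentiableAt ℝ h p) (v : ℂ × ℝ) :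
    fderiv ℝ (fun q => g q + h q) p v = fderiv ℝ g p v + fderiv ℝ h p v := by
  rw [fderiv_fun_add hg hh]; simp

lemma fd_inv (hg : DifferentiableAt ℝ g p) (hne : g p ≠ 0) (v : ℂ × ℝ) :
    fderiv ℝ (fun q => (g q)⁻¹) p v
      = -((g p)⁻¹ * fderiv ℝ g p v * (g p)⁻¹) := by
  have h1 : HasFDerivAt (fun q => (g q)⁻¹)
      ((-ContinuousLinearMap.mulLeftRight ℝ ℂ (g p)⁻¹ (g p)⁻¹).comp (fderiv ℝ g p)) p :=
    (hasFDerivAt_inv' (𝕜 := ℝ) hne).comp p hg.hasFDerivAt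
  rw [h1.fderiv]
  simp

lemma diff_inv (hg : DifferentiableAt ℝ g p) (hne : g p ≠ 0) :
    DifferentiableAt ℝ (fun q => (g q)⁻¹) p :=
  (differentiableAt_inv (𝕜 := ℝ) hne).comp p hg

lemma dz_mul (hg : DifferentiableAt ℝ g p) (hh : DifferentiableAt ℝ h p) :
    dz (fun q => g q * h q) p = dz g p * h p + g p * dz h p := by
  simp only [dz, fd_mul hg hh]; ring

lemma dzb_mul (hg : DifferentiableAt ℝ g p) (hh : DifferentiableAt ℝ h p) :
    dzb (fun q => g q * h q) p = dzb g p * h p + g p * dzb h p := by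
  simp only [dzb, fd_mul hg hh]; ring

lemma dt_mul (hg : DifferentiableAt ℝ g p) (hh : DifferentiableAt ℝ h p) :
    dt (fun q => g q * h q) p = dt g p * h p + g p * dt h p := by
  simp only [dt, fd_mul hg hh]; ring

lemma dz_add (hg : DifferentiableAt ℝ g p) (hh : DifferentiableAt ℝ h p) :
    dz (fun q => g q + h q) p = dz g p + dz h p := by
  simp only [dz, fd_add hg hh]; ring

lemma dzb_add (hg : DifferentiableAt ℝ g p) (hh : DifferentiableAt ℝ h p) :
    dzb (fun q => g q + h q) p = dzb g p + dzb h p := by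
  simp only [dzb, fd_add hg hh]; ring

lemma dt_add (hg : DifferentiableAt ℝ g p) (hh : DifferentiableAt ℝ h p) :
    dt (fun q => g q + h q) p = dt g p + dt h p := by
  simp only [dt, fd_add hg hh]

lemma dz_inv (hg : DifferentiableAt ℝ g p) (hne : g p ≠ 0) :
    dz (fun q => (g q)⁻¹) p = -((g p)⁻¹ * dz g p * (g p)⁻¹) := by
  simp only [dz, fd_inv hg hne]; ring

lemma dzb_inv (hg : DifferentiableAt ℝ g p) (hne : g p ≠ 0) :
    dzb (fun q => (g q)⁻¹) p = -((g p)⁻¹ * dzb g p * (g p)⁻¹) := by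
  simp only [dzb, fd_inv hg hne]; ring

lemma dt_inv (hg : DifferentiableAt ℝ g p) (hne : g p ≠ 0) :
    dt (fun q => (g q)⁻¹) p = -((g p)⁻¹ * dt g p * (g p)⁻¹) := by
  simp only [dt, fd_inv hg hne]

lemma dz_const (a : ℂ) : dz (fun _ => a) p = 0 := by
  simp [dz, fderiv_const]

lemma dzb_const (a : ℂ) : dzb (fun _ => a) p = 0 := by
  simp [dzb, fderiv_const]

lemma dt_const (a : ℂ) : dt (fun _ => a) p = 0 := by
  simp [dt, fderiv_const]

/-! ### Base coordinate functions -/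

lemma fd_z (v : ℂ × ℝ) : fderiv ℝ (fun q : ℂ × ℝ => q.1) p v = v.1 := by
  rw [(hasFDerivAt_fst (p := p)).fderiv]; rfl

lemma diff_z : DifferentiableAt ℝ (fun q : ℂ × ℝ => q.1) p :=
  differentiable_fst.differentiableAt

lemma fd_w (v : ℂ × ℝ) : fderiv ℝ (fun q : ℂ × ℝ => conj q.1) p v = conj v.1 := by
  have h : HasFDerivAt (fun q : ℂ × ℝ => conj q.1)
      ((Complex.conjCLE.toContinuousLinearMap).comp (ContinuousLinearMap.fst ℝ ℂ ℝ)) p :=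
    (Complex.conjCLE.toContinuousLinearMap.hasFDerivAt).comp p hasFDerivAt_fst
  rw [h.fderiv]; rfl

lemma diff_w : DifferentiableAt ℝ (fun q : ℂ × ℝ => conj q.1) p :=
  (Complex.conjCLE.toContinuousLinearMap.differentiableAt).comp p differentiable_fst.differentiableAt

lemma fd_t (v : ℂ × ℝ) : fderiv ℝ (fun q : ℂ × ℝ => (q.2 : ℂ)) p v = (v.2 : ℂ) := by
  have h : HasFDerivAt (fun q : ℂ × ℝ => (q.2 : ℂ))
      (Complex.ofRealCLM.comp (ContinuousLinearMap.snd ℝ ℂ ℝ)) p :=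
    (Complex.ofRealCLM.hasFDerivAt).comp p hasFDerivAt_snd
  rw [h.fderiv]; rfl

lemma diff_t : DifferentiableAt ℝ (fun q : ℂ × ℝ => (q.2 : ℂ)) p :=
  (Complex.ofRealCLM.differentiableAt).comp p differentiable_snd.differentiableAt

/-! ### Expressions -/

inductive Ex where
  | z | w | t | C (a : ℂ) | add (a b : Ex) | mul (a b : Ex) | invD

/-- The denominator function. -/
def DD (c : ℂ) : ℂ × ℝ → ℂ := fun p =>
  p.1 * conj p.1 +
    (p.1 * p.1 + 2 * Complex.I * (p.2 : ℂ) + c) *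
      (conj p.1 * conj p.1 - 2 * Complex.I * (p.2 : ℂ) + conj c)

def ev (c : ℂ) : Ex → ℂ × ℝ → ℂ
  | .z => fun p => p.1
  | .w => fun p => conj p.1
  | .t => fun p => (p.2 : ℂ)
  | .C a => fun _ => a
  | .add a b => fun p => ev c a p + ev c b p
  | .mul a b => fun p => ev c a p * ev c b p
  | .invD => fun p => (DD c p)⁻¹

def pure? : Ex → Prop
  | .add a b => pure? a ∧ pure? b
  | .mul a b => pure? a ∧ pure? b
  | .invD => False
  | _ => True

/-- structural Wirtinger ∂_z on expressions (invD gets a dummy value). -/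
def dzP : Ex → Ex
  | .z => .C 1
  | .w => .C 0
  | .t => .C 0
  | .C _ => .C 0
  | .add a b => .add (dzP a) (dzP b)
  | .mul a b => .add (.mul (dzP a) b) (.mul a (dzP b))
  | .invD => .C 0

def dzbP : Ex → Ex
  | .z => .C 0
  | .w => .C 1
  | .t => .C 0
  | .C _ => .C 0
  | .add a b => .add (dzbP a) (dzbP b)
  | .mul a b => .add (.mul (dzbP a) b) (.mul a (dzbP b))
  | .invD => .C 0

def dtP : Ex → Ex
  | .z => .C 0
  | .w => .C 0
  | .t => .C 1
  | .C _ => .C 0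
  | .add a b => .add (dtP a) (dtP b)
  | .mul a b => .add (.mul (dtP a) b) (.mul a (dtP b))
  | .invD => .C 0

def eF (c : ℂ) : Ex := .add (.add (.mul .z .z) (.mul (.C (2 * Complex.I)) .t)) (.C c)
def eG (c : ℂ) : Ex := .add (.add (.mul .w .w) (.mul (.C (-(2 * Complex.I))) .t)) (.C (conj c))
def eD (c : ℂ) : Ex := .add (.mul .z .w) (.mul (eF c) (eG c))

def dzE (c : ℂ) : Ex → Ex
  | .z => .C 1
  | .w => .C 0
  | .t => .C 0
  | .C _ => .C 0
  | .add a b => .add (dzE c a) (dzE c b)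
  | .mul a b => .add (.mul (dzE c a) b) (.mul a (dzE c b))
  | .invD => .mul (.C (-1)) (.mul (.mul (dzP (eD c)) .invD) .invD)

def dzbE (c : ℂ) : Ex → Ex
  | .z => .C 0
  | .w => .C 1
  | .t => .C 0
  | .C _ => .C 0
  | .add a b => .add (dzbE c a) (dzbE c b)
  | .mul a b => .add (.mul (dzbE c a) b) (.mul a (dzbE c b))
  | .invD => .mul (.C (-1)) (.mul (.mul (dzbP (eD c)) .invD) .invD)

def dtE (c : ℂ) : Ex → Ex
  | .z => .C 0
  | .w => .C 0
  | .t => .C 1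
  | .C _ => .C 0
  | .add a b => .add (dtE c a) (dtE c b)
  | .mul a b => .add (.mul (dtE c a) b) (.mul a (dtE c b))
  | .invD => .mul (.C (-1)) (.mul (.mul (dtP (eD c)) .invD) .invD)

lemma ev_eD (c : ℂ) : ev c (eD c) = DD c := by
  funext p
  simp only [ev, eD, eF, eG, DD]
  ring

lemma pure_eD (c : ℂ) : pure? (eD c) := by
  simp [eD, eF, eG, pure?]

/-- Derivatives of pure expressions, valid everywhere. -/
lemma lemA (c : ℂ) : ∀ e : Ex, pure? e → ∀ p : ℂ × ℝ,
    DifferentiableAt ℝ (ev c e) p ∧ dz (ev c e) p = ev c (dzP e) p ∧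
      dzb (ev c e) p = ev c (dzbP e) p ∧ dt (ev c e) p = ev c (dtP e) p := by
  intro e
  induction e with
  | z => intro _ p
         exact ⟨diff_z, by simp [dz, ev, dzP, fd_z, Complex.I_mul_I]; ring,
            by simp [dzb, ev, dzbP, fd_z, Complex.I_mul_I]; try ring,
            by simp [dt, ev, dtP, fd_z]⟩
  | w => intro _ p
         refine ⟨diff_w, ?_, ?_, ?_⟩ <;>
           simp [dz, dzb, dt, ev, dzP, dzbP, dtP, fd_w, Complex.I_mul_I] <;> try ring
  | t => intro _ p
         refine ⟨diff_t, ?_, ?_, ?_⟩ <;>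
           simp [dz, dzb, dt, ev, dzP, dzbP, dtP, fd_t]
  | C a => intro _ p
           exact ⟨differentiableAt_const a, by simp [ev, dzP, dz_const],
             by simp [ev, dzbP, dzb_const], by simp [ev, dtP, dt_const]⟩
  | add a b iha ihb =>
      intro hp p
      obtain ⟨ha, hb⟩ := hp
      obtain ⟨d1, z1, zb1, t1⟩ := iha ha p
      obtain ⟨d2, z2, zb2, t2⟩ := ihb hb p
      refine ⟨d1.add d2, ?_, ?_, ?_⟩
      · rw [show ev c (.add a b) = fun q => ev c a q + ev c b q from rfl, dz_add d1 d2, z1, z2]; rfl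
      · rw [show ev c (.add a b) = fun q => ev c a q + ev c b q from rfl, dzb_add d1 d2, zb1, zb2]; rfl
      · rw [show ev c (.add a b) = fun q => ev c a q + ev c b q from rfl, dt_add d1 d2, t1, t2]; rfl
  | mul a b iha ihb =>
      intro hp p
      obtain ⟨ha, hb⟩ := hp
      obtain ⟨d1, z1, zb1, t1⟩ := iha ha p
      obtain ⟨d2, z2, zb2, t2⟩ := ihb hb p
      refine ⟨d1.mul d2, ?_, ?_, ?_⟩
      · rw [show ev c (.mul a b) = fun q => ev c a q * ev c b q from rfl, dz_mul d1 d2, z1, z2]; rfl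
      · rw [show ev c (.mul a b) = fun q => ev c a q * ev c b q from rfl, dzb_mul d1 d2, zb1, zb2]; rfl
      · rw [show ev c (.mul a b) = fun q => ev c a q * ev c b q from rfl, dt_mul d1 d2, t1, t2]; rfl
  | invD => intro hp; exact absurd hp (by simp [pure?])

lemma wdDD (c : ℂ) (p : ℂ × ℝ) :
    DifferentiableAt ℝ (DD c) p ∧ dz (DD c) p = ev c (dzP (eD c)) p ∧
      dzb (DD c) p = ev c (dzbP (eD c)) p ∧ dt (DD c) p = ev c (dtP (eD c)) p := by
  have h := lemA c (eD c) (pure_eD c) p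
  rwa [ev_eD] at h

/-- Derivatives of arbitrary expressions, valid where DD ≠ 0. -/
lemma lemB (c : ℂ) : ∀ e : Ex, ∀ p : ℂ × ℝ, DD c p ≠ 0 →
    DifferentiableAt ℝ (ev c e) p ∧ dz (ev c e) p = ev c (dzE c e) p ∧
      dzb (ev c e) p = ev c (dzbE c e) p ∧ dt (ev c e) p = ev c (dtE c e) p := by
  intro e
  induction e with
  | z => intro p _
         exact ⟨diff_z, by simp [dz, ev, dzE, fd_z, Complex.I_mul_I]; ring,
            by simp [dzb, ev, dzbE, fd_z, Complex.I_mul_I]; try ring,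
            by simp [dt, ev, dtE, fd_z]⟩
  | w => intro p _
         refine ⟨diff_w, ?_, ?_, ?_⟩ <;>
           simp [dz, dzb, dt, ev, dzE, dzbE, dtE, fd_w, Complex.I_mul_I] <;> try ring
  | t => intro p _
         refine ⟨diff_t, ?_, ?_, ?_⟩ <;>
           simp [dz, dzb, dt, ev, dzE, dzbE, dtE, fd_t]
  | C a => intro p _
           exact ⟨differentiableAt_const a, by simp [ev, dzE, dz_const],
             by simp [ev, dzbE, dzb_const], by simp [ev, dtE, dt_const]⟩
  | add a b iha ihb =>
      intro p hne
      obtain ⟨d1, z1, zb1, t1⟩ := iha p hne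
      obtain ⟨d2, z2, zb2, t2⟩ := ihb p hne
      refine ⟨d1.add d2, ?_, ?_, ?_⟩
      · rw [show ev c (.add a b) = fun q => ev c a q + ev c b q from rfl, dz_add d1 d2, z1, z2]; rfl
      · rw [show ev c (.add a b) = fun q => ev c a q + ev c b q from rfl, dzb_add d1 d2, zb1, zb2]; rfl
      · rw [show ev c (.add a b) = fun q => ev c a q + ev c b q from rfl, dt_add d1 d2, t1, t2]; rfl
  | mul a b iha ihb =>
      intro p hne
      obtain ⟨d1, z1, zb1, t1⟩ := iha p hne
      obtain ⟨d2, z2, zb2, t2⟩ := ihb p hne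
      refine ⟨d1.mul d2, ?_, ?_, ?_⟩
      · rw [show ev c (.mul a b) = fun q => ev c a q * ev c b q from rfl, dz_mul d1 d2, z1, z2]; rfl
      · rw [show ev c (.mul a b) = fun q => ev c a q * ev c b q from rfl, dzb_mul d1 d2, zb1, zb2]; rfl
      · rw [show ev c (.mul a b) = fun q => ev c a q * ev c b q from rfl, dt_mul d1 d2, t1, t2]; rfl
  | invD =>
      intro p hne
      obtain ⟨dD, zD, zbD, tD⟩ := wdDD c p
      have hev : ev c Ex.invD = fun q => (DD c q)⁻¹ := rfl
      refine ⟨?_, ?_, ?_, ?_⟩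
      · rw [hev]; exact diff_inv dD hne
      · rw [hev, dz_inv dD hne, zD]
        simp only [dzE, ev]
        ring
      · rw [hev, dzb_inv dD hne, zbD]
        simp only [dzbE, ev]
        ring
      · rw [hev, dt_inv dD hne, tD]
        simp only [dtE, ev]
        ring

lemma contDD (c : ℂ) : Continuous (DD c) := by
  have h1 : Continuous fun p : ℂ × ℝ => conj p.1 :=
    Complex.continuous_conj.comp continuous_fst
  have h2 : Continuous fun p : ℂ × ℝ => (p.2 : ℂ) :=
    Complex.continuous_ofReal.comp continuous_snd
  unfold DD
  continuity

lemma dz_congr {g h : ℂ × ℝ → ℂ} {p : ℂ × ℝ} (he : g =ᶠ[nhds p] h) : dz g p = dz h p := by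
  unfold dz; rw [he.fderiv_eq]

lemma dzb_congr {g h : ℂ × ℝ → ℂ} {p : ℂ × ℝ} (he : g =ᶠ[nhds p] h) : dzb g p = dzb h p := by
  unfold dzb; rw [he.fderiv_eq]

/-- Second derivatives. -/
lemma lem2 (c : ℂ) (e : Ex) (p : ℂ × ℝ) (hne : DD c p ≠ 0) :
    dz (dz (ev c e)) p = ev c (dzE c (dzE c e)) p ∧
      dzb (dzb (ev c e)) p = ev c (dzbE c (dzbE c e)) p := by
  have hopen : IsOpen {q : ℂ × ℝ | DD c q ≠ 0} :=
    isOpen_compl_singleton.preimage (contDD c)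
  have hmem : {q : ℂ × ℝ | DD c q ≠ 0} ∈ nhds p := hopen.mem_nhds hne
  constructor
  · have he : dz (ev c e) =ᶠ[nhds p] ev c (dzE c e) :=
      Filter.eventuallyEq_of_mem hmem (fun q hq => (lemB c e q hq).2.1)
    rw [dz_congr he]
    exact (lemB c (dzE c e) p hne).2.1
  · have he : dzb (ev c e) =ᶠ[nhds p] ev c (dzbE c e) :=
      Filter.eventuallyEq_of_mem hmem (fun q hq => (lemB c e q hq).2.2.1)
    rw [dzb_congr he]
    exact (lemB c (dzbE c e) p hne).2.2.1

/-! ### The concrete expressions for U, V, etc. -/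

def eN (c : ℂ) : Ex := .add (.add (.mul .z .z) (.mul (.C (-(2 * Complex.I))) .t)) (.C (-c))
def eM (c : ℂ) : Ex := .add (.add (.mul .w .w) (.mul (.C (2 * Complex.I)) .t)) (.C (-(conj c)))
def eU (c : ℂ) : Ex := .mul (.C Complex.I) (.mul (eN c) .invD)
def eUb (c : ℂ) : Ex := .mul (.C (-Complex.I)) (.mul (eM c) .invD)
def eB (c : ℂ) : Ex := .add (.mul (.mul (.C 2) .z) (eG c)) .w
def eBb (c : ℂ) : Ex := .add (.mul (.mul (.C 2) .w) (eF c)) .z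
def eV (c : ℂ) : Ex :=
  .add (.mul (.mul (.C 4) (eG c)) .invD)
    (.mul (.C (-2)) (.mul (.mul (eB c) (eB c)) (.mul .invD .invD)))
def eVb (c : ℂ) : Ex :=
  .add (.mul (.mul (.C 4) (eF c)) .invD)
    (.mul (.C (-2)) (.mul (.mul (eBb c) (eBb c)) (.mul .invD .invD)))
def eUUb (c : ℂ) : Ex := .mul (eU c) (eUb c)

end DSAux

open DSAux

set_option maxHeartbeats 4000000 in
/-- The solution from f = z² + 2it + c (case n = 1). -/
theorem solution_n1
    (c : ℂ)
    (f D U V : ℂ × ℝ → ℂ)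
    (hf : ∀ p, f p = p.1 ^ 2 + 2 * Complex.I * (p.2 : ℂ) + c)
    (hD : ∀ p, D p = (Complex.normSq p.1 : ℂ) + (Complex.normSq (f p) : ℂ))
    (hUdef : ∀ p, U p = Complex.I * (p.1 ^ 2 - 2 * Complex.I * (p.2 : ℂ) - c) / D p)
    (hVdef : ∀ p, V p =
      4 * (conj p.1 ^ 2 - 2 * Complex.I * (p.2 : ℂ) + conj c) / D p
        - 2 * (2 * p.1 * (conj p.1 ^ 2 - 2 * Complex.I * (p.2 : ℂ) + conj c) + conj p.1) ^ 2
            / D p ^ 2) :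
    ∀ p : ℂ × ℝ, D p ≠ 0 → DSIIAt U V p := by
  have hDp : ∀ q, D q = DD c q := by
    intro q
    rw [hD, ← Complex.mul_conj, ← Complex.mul_conj, hf]
    have hcf : conj (q.1 ^ 2 + 2 * Complex.I * (q.2 : ℂ) + c)
        = conj q.1 ^ 2 - 2 * Complex.I * (q.2 : ℂ) + conj c := by
      simp [map_add, map_mul, map_pow, map_ofNat, Complex.conj_I, Complex.conj_ofReal]
      ring
    rw [hcf]
    simp only [DD]
    ring
  have hDconj : ∀ q, conj (D q) = D q := by
    intro q
    rw [hD]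
    simp [Complex.conj_ofReal]
  intro p hp
  have hne : DD c p ≠ 0 := by rw [← hDp]; exact hp
  -- U and V as expression evaluations
  have hU : U = ev c (eU c) := by
    funext q
    rw [hUdef, hDp, div_eq_mul_inv]
    simp only [ev, eU, eN]
    ring
  have hUb : ∀ q, conj (U q) = ev c (eUb c) q := by
    intro q
    rw [hUdef, map_div₀]
    rw [hDconj, hDp, div_eq_mul_inv]
    simp only [map_mul, map_sub, map_pow, map_ofNat, Complex.conj_I, Complex.conj_ofReal, ev, eUb, eM]
    ring
  have hV : V = ev c (eV c) := by
    funext q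
    rw [hVdef, hDp, div_eq_mul_inv, div_eq_mul_inv]
    simp only [ev, eV, eB, eG]
    ring
  have hVb : conj (V p) = ev c (eVb c) p := by
    rw [hVdef, map_sub, map_div₀, map_div₀]
    rw [map_pow, hDconj, hDp, div_eq_mul_inv, div_eq_mul_inv]
    simp only [map_mul, map_add, map_sub, map_pow, map_ofNat, Complex.conj_I,
      Complex.conj_ofReal, Complex.conj_conj, ev, eVb, eBb, eF]
    ring
  have hUUb : (fun q => U q * conj (U q)) = ev c (eUUb c) := by
    funext q
    rw [hUb q, congrFun hU q]
    rfl
  constructor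
  · -- evolution equation
    rw [hVb, hU, hV]
    rw [(lemB c (eU c) p hne).2.2.2, (lem2 c (eU c) p hne).1, (lem2 c (eU c) p hne).2]
    have hne' : p.1 * conj p.1 +
        (p.1 * p.1 + 2 * Complex.I * (p.2 : ℂ) + c) *
          (conj p.1 * conj p.1 - 2 * Complex.I * (p.2 : ℂ) + conj c) ≠ 0 := hne
    have hDDexp : DD c p = p.1 * (starRingEnd ℂ) p.1 +
        (p.1 * p.1 + 2 * Complex.I * ((p.2 : ℝ) : ℂ) + c) *
          ((starRingEnd ℂ) p.1 * (starRingEnd ℂ) p.1 - 2 * Complex.I * ((p.2 : ℝ) : ℂ) +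
            (starRingEnd ℂ) c) := rfl
    have hrel : (p.1 * (starRingEnd ℂ) p.1 +
        (p.1 * p.1 + 2 * Complex.I * ((p.2 : ℝ) : ℂ) + c) *
          ((starRingEnd ℂ) p.1 * (starRingEnd ℂ) p.1 - 2 * Complex.I * ((p.2 : ℝ) : ℂ) +
            (starRingEnd ℂ) c)) * (DD c p)⁻¹ = 1 := by
      rw [← hDDexp]; exact mul_inv_cancel₀ hne
    simp only [ev, dzE, dzbE, dtE, dzP, dzbP, dtP, eU, eUb, eV, eVb, eB, eBb, eN, eM,
      eF, eG, eD]
    have hI : Complex.I * Complex.I = -1 := Complex.I_mul_I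
    linear_combination ((-4)*((DD c p)⁻¹)) * hrel + ((-4)*((DD c p)⁻¹) + (4)*c*((starRingEnd ℂ) c)*((DD c p)⁻¹)^2 + (8)*(((p.2 : ℝ) : ℂ))*((starRingEnd ℂ) c)*Complex.I*((DD c p)⁻¹)^2 + (-8)*(((p.2 : ℝ) : ℂ))*c*Complex.I*((DD c p)⁻¹)^2 + (-16)*(((p.2 : ℝ) : ℂ))^2*Complex.I^2*((DD c p)⁻¹)^2 + (4)*((starRingEnd ℂ) p.1)^2*c*((DD c p)⁻¹)^2 + (8)*((starRingEnd ℂ) p.1)^2*(((p.2 : ℝ) : ℂ))*Complex.I*((DD c p)⁻¹)^2 + (4)*(p.1)*((starRingEnd ℂ) p.1)*((DD c p)⁻¹)^2 + (4)*(p.1)^2*((starRingEnd ℂ) c)*((DD c p)⁻¹)^2 + (-8)*(p.1)^2*(((p.2 : ℝ) : ℂ))*Complex.I*((DD c p)⁻¹)^2 + (4)*(p.1)^2*((starRingEnd ℂ) p.1)^2*((DD c p)⁻¹)^2) * hI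
  · -- constraint equation
    rw [hUUb, hV]
    rw [(lemB c (eV c) p hne).2.2.1]
    rw [(lemB c (eUUb c) p hne).2.1]
    have hne' : p.1 * conj p.1 +
        (p.1 * p.1 + 2 * Complex.I * (p.2 : ℂ) + c) *
          (conj p.1 * conj p.1 - 2 * Complex.I * (p.2 : ℂ) + conj c) ≠ 0 := hne
    have hDDexp : DD c p = p.1 * (starRingEnd ℂ) p.1 +
        (p.1 * p.1 + 2 * Complex.I * ((p.2 : ℝ) : ℂ) + c) *
          ((starRingEnd ℂ) p.1 * (starRingEnd ℂ) p.1 - 2 * Complex.I * ((p.2 : ℝ) : ℂ) +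
            (starRingEnd ℂ) c) := rfl
    have hrel : (p.1 * (starRingEnd ℂ) p.1 +
        (p.1 * p.1 + 2 * Complex.I * ((p.2 : ℝ) : ℂ) + c) *
          ((starRingEnd ℂ) p.1 * (starRingEnd ℂ) p.1 - 2 * Complex.I * ((p.2 : ℝ) : ℂ) +
            (starRingEnd ℂ) c)) * (DD c p)⁻¹ = 1 := by
      rw [← hDDexp]; exact mul_inv_cancel₀ hne
    simp only [ev, dzE, dzbE, dtE, dzP, dzbP, dtP, eU, eUb, eUUb, eV, eVb, eB, eBb, eN, eM,
      eF, eG, eD]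
    have hI : Complex.I * Complex.I = -1 := Complex.I_mul_I
    linear_combination ((-8)*((starRingEnd ℂ) p.1)*((DD c p)⁻¹) + (4)*((starRingEnd ℂ) p.1)*((DD c p)⁻¹)^2 + (8)*(p.1)*((starRingEnd ℂ) c)*((DD c p)⁻¹)^2 + ((-16)*Complex.I)*(p.1)*(((p.2 : ℝ) : ℂ))*((DD c p)⁻¹)^2 + (24)*(p.1)*((starRingEnd ℂ) p.1)^2*((DD c p)⁻¹)^2 + (32)*(p.1)^2*((starRingEnd ℂ) p.1)*((starRingEnd ℂ) c)*((DD c p)⁻¹)^2 + ((-64)*Complex.I)*(p.1)^2*((starRingEnd ℂ) p.1)*(((p.2 : ℝ) : ℂ))*((DD c p)⁻¹)^2 + (32)*(p.1)^2*((starRingEnd ℂ) p.1)^3*((DD c p)⁻¹)^2) * hrel + ((-4)*((starRingEnd ℂ) p.1)*c*((starRingEnd ℂ) c)*((DD c p)⁻¹)^3 + (-8)*((starRingEnd ℂ) p.1)*(((p.2 : ℝ) : ℂ))*((starRingEnd ℂ) c)*Complex.I*((DD c p)⁻¹)^3 + (8)*((starRingEnd ℂ) p.1)*(((p.2 : ℝ)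 : ℂ))*c*Complex.I*((DD c p)⁻¹)^3 + (16)*((starRingEnd ℂ) p.1)*(((p.2 : ℝ) : ℂ))^2*Complex.I^2*((DD c p)⁻¹)^3 + (4)*((starRingEnd ℂ) p.1)^3*c*((DD c p)⁻¹)^3 + (8)*((starRingEnd ℂ) p.1)^3*(((p.2 : ℝ) : ℂ))*Complex.I*((DD c p)⁻¹)^3 + (-4)*(p.1)*((starRingEnd ℂ) c)*((DD c p)⁻¹)^2 + (-8)*(p.1)*c*((starRingEnd ℂ) c)^2*((DD c p)⁻¹)^3 + (8)*(p.1)*(((p.2 : ℝ) : ℂ))*Complex.I*((DD c p)⁻¹)^2 + (-16)*(p.1)*(((p.2 : ℝ) : ℂ))*((starRingEnd ℂ) c)^2*Complex.I*((DD c p)⁻¹)^3 + (32)*(p.1)*(((p.2 : ℝ) : ℂ))*c*((starRingEnd ℂ) c)*Complex.I*((DD c p)⁻¹)^3 + (64)*(p.1)*(((p.2 : ℝ) : ℂ))^2*((starRingEnd ℂ) c)*Complex.I^2*((DD c p)⁻¹)^3 + (-32)*(p.1)*(((p.2 : ℝ) : ℂ))^2*c*Complex.I^2*((DD c p)⁻¹)^3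 + (-64)*(p.1)*(((p.2 : ℝ) : ℂ))^3*Complex.I^3*((DD c p)⁻¹)^3 + (4)*(p.1)*((starRingEnd ℂ) p.1)^2*((DD c p)⁻¹)^2 + (8)*(p.1)*((starRingEnd ℂ) p.1)^4*c*((DD c p)⁻¹)^3 + (16)*(p.1)*((starRingEnd ℂ) p.1)^4*(((p.2 : ℝ) : ℂ))*Complex.I*((DD c p)⁻¹)^3 + (4)*(p.1)^2*((starRingEnd ℂ) p.1)*((starRingEnd ℂ) c)*((DD c p)⁻¹)^3 + (-8)*(p.1)^2*((starRingEnd ℂ) p.1)*(((p.2 : ℝ) : ℂ))*Complex.I*((DD c p)⁻¹)^3 + (-4)*(p.1)^2*((starRingEnd ℂ) p.1)^3*((DD c p)⁻¹)^3 + (8)*(p.1)^3*((starRingEnd ℂ) c)^2*((DD c p)⁻¹)^3 + (-32)*(p.1)^3*(((p.2 : ℝ) : ℂ))*((starRingEnd ℂ) c)*Complex.I*((DD c p)⁻¹)^3 + (32)*(p.1)^3*(((p.2 : ℝ) : ℂ))^2*Complex.I^2*((DD c p)⁻¹)^3 + (-8)*(p.1)^3*((starRingEnd ℂ) p.1)^4*((DD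 c p)⁻¹)^3) * hI

end
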